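/- The set of minimizers of ℓ ↦ U(ℓ, μ) over [0, R] is characterized as follows: if 0 ≤ μ < 1/F, the unique minimizer is ℓ = m; if μ = 1/F, the set of minimizers is exactly the interval [0, m]; and if μ > 1/F, the unique minimizer is ℓ = 0. -/

import Mathlib

/-- The user's cost: latency plus payment. -/
noncomputable def cost (β F C R μ ℓ : ℝ) : ℝ := max ((R - ℓ) * C / F) (β * ℓ) + μ * ℓ * C

/-- The threshold m = C·R/(β·F + C). -/
noncomputable def thresh (β F C R : ℝ) : ℝ := C * R / (β * F + C)

/-- Characterization of the set of minimizers of ℓ ↦ U(ℓ, μ) over [0, R]. -/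
theorem stmt_4 (β F C R : ℝ) (hβ : 0 < β) (hF : 0 < F) (hC : 0 < C) (hR : 0 < R)
    (μ : ℝ) (hμ : 0 ≤ μ) :
    (μ < 1 / F →
      ∀ ℓ ∈ Set.Icc (0 : ℝ) R,
        ((∀ ℓ' ∈ Set.Icc (0 : ℝ) R, cost β F C R μ ℓ ≤ cost β F C R μ ℓ') ↔
          ℓ = thresh β F C R)) ∧
    (μ = 1 / F →
      ∀ ℓ ∈ Set.Icc (0 : ℝ) R,
        ((∀ ℓ' ∈ Set.Icc (0 : ℝ) R, cost β F C R μ ℓ ≤ cost β F C R μ ℓ') ↔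
          ℓ ∈ Set.Icc (0 : ℝ) (thresh β F C R))) ∧
    (1 / F < μ →
      ∀ ℓ ∈ Set.Icc (0 : ℝ) R,
        ((∀ ℓ' ∈ Set.Icc (0 : ℝ) R, cost β F C R μ ℓ ≤ cost β F C R μ ℓ') ↔
          ℓ = 0)) := by
  have hD : (0:ℝ) < β * F + C := by positivity
  set m := thresh β F C R with hm
  have hm0 : 0 < m := by rw [hm, thresh]; positivity
  have hmR : m < R := by
    rw [hm, thresh, div_lt_iff₀ hD]; nlinarith [mul_pos (mul_pos hβ hF) hR]
  have hle : ∀ ℓ : ℝ, ℓ ≤ m → β * ℓ ≤ (R - ℓ) * C / F := by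
    intro ℓ hℓ
    rw [le_div_iff₀ hF]
    have h1 : ℓ * (β * F + C) ≤ C * R := by
      rw [hm, thresh] at hℓ
      calc ℓ * (β * F + C) ≤ C * R / (β * F + C) * (β * F + C) :=
            mul_le_mul_of_nonneg_right hℓ hD.le
        _ = C * R := div_mul_cancel₀ _ hD.ne'
    nlinarith
  have hge : ∀ ℓ : ℝ, m ≤ ℓ → (R - ℓ) * C / F ≤ β * ℓ := by
    intro ℓ hℓ
    rw [div_le_iff₀ hF]
    have h1 : C * R ≤ ℓ * (β * F + C) := by
      rw [hm, thresh] at hℓ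
      calc C * R = C * R / (β * F + C) * (β * F + C) := (div_mul_cancel₀ _ hD.ne').symm
        _ ≤ ℓ * (β * F + C) := mul_le_mul_of_nonneg_right hℓ hD.le
    nlinarith
  have costA : ∀ ℓ : ℝ, ℓ ≤ m → cost β F C R μ ℓ = (R - ℓ) * C / F + μ * ℓ * C := by
    intro ℓ hℓ; rw [cost, max_eq_left (hle ℓ hℓ)]
  have costB : ∀ ℓ : ℝ, m ≤ ℓ → cost β F C R μ ℓ = β * ℓ + μ * ℓ * C := by
    intro ℓ hℓ; rw [cost, max_eq_right (hge ℓ hℓ)]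
  have diffA : ∀ a b : ℝ, a ≤ m → b ≤ m →
      cost β F C R μ a - cost β F C R μ b = (b - a) * (C / F - μ * C) := by
    intro a b ha hb; rw [costA a ha, costA b hb]; field_simp; ring
  have diffB : ∀ a b : ℝ, m ≤ a → m ≤ b →
      cost β F C R μ a - cost β F C R μ b = (a - b) * (β + μ * C) := by
    intro a b ha hb; rw [costB a ha, costB b hb]; ring
  have hBpos : 0 < β + μ * C := by positivity
  refine ⟨?_, ?_, ?_⟩
  · -- μ < 1/F
    intro hμF ℓ hℓ
    have hμF1 : μ * F < 1 := (lt_div_iff₀ hF).mp hμF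
    have hX : 0 < C / F - μ * C := by
      rw [sub_pos, lt_div_iff₀ hF]; nlinarith
    constructor
    · intro hmin
      have h1 := hmin m ⟨hm0.le, hmR.le⟩
      rcases lt_trichotomy ℓ m with h | h | h
      · exfalso
        have hd := diffA ℓ m h.le le_rfl
        have hp : 0 < (m - ℓ) * (C / F - μ * C) := mul_pos (by linarith) hX
        linarith
      · exact h
      · exfalso
        have hd := diffB ℓ m h.le le_rfl
        have hp : 0 < (ℓ - m) * (β + μ * C) := mul_pos (by linarith) hBpos
        linarith
    · intro h ℓ' hℓ'
      subst h
      rcases le_total ℓ' m with h | h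
      · have hd := diffA ℓ' m h le_rfl
        have hp : 0 ≤ (m - ℓ') * (C / F - μ * C) :=
          mul_nonneg (by linarith) hX.le
        linarith
      · have hd := diffB ℓ' m h le_rfl
        have hp : 0 ≤ (ℓ' - m) * (β + μ * C) :=
          mul_nonneg (by linarith) hBpos.le
        linarith
  · -- μ = 1/F
    intro hμF ℓ hℓ
    have hX0 : C / F - μ * C = 0 := by
      rw [hμF]; field_simp; ring
    constructor
    · intro hmin
      refine ⟨hℓ.1, ?_⟩
      by_contra h
      push_neg at h
      have h1 := hmin m ⟨hm0.le, hmR.le⟩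
      have hd := diffB ℓ m h.le le_rfl
      have hp : 0 < (ℓ - m) * (β + μ * C) := mul_pos (by linarith) hBpos
      linarith
    · intro h ℓ' hℓ'
      rcases le_total ℓ' m with hc | hc
      · have hd := diffA ℓ ℓ' h.2 hc
        rw [hX0, mul_zero] at hd
        linarith
      · have hd1 := diffA ℓ m h.2 le_rfl
        rw [hX0, mul_zero] at hd1
        have hd2 := diffB ℓ' m hc le_rfl
        have hp : 0 ≤ (ℓ' - m) * (β + μ * C) := mul_nonneg (by linarith) hBpos.le
        linarith
  · -- 1/F < μ
    intro hμF ℓ hℓ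
    have hμF1 : 1 < μ * F := (div_lt_iff₀ hF).mp hμF
    have hX : C / F - μ * C < 0 := by
      rw [sub_neg, div_lt_iff₀ hF]; nlinarith
    constructor
    · intro hmin
      by_contra h
      have hℓpos : 0 < ℓ := lt_of_le_of_ne hℓ.1 (Ne.symm h)
      have h0 := hmin 0 ⟨le_rfl, hR.le⟩
      rcases le_total ℓ m with hc | hc
      · have hd := diffA ℓ 0 hc hm0.le
        have hp : 0 < (0 - ℓ) * (C / F - μ * C) :=
          mul_pos_of_neg_of_neg (by linarith) hX
        linarith
      · have hd1 := diffB ℓ m hc le_rfl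
        have hp1 : 0 ≤ (ℓ - m) * (β + μ * C) := mul_nonneg (by linarith) hBpos.le
        have hd2 := diffA m 0 le_rfl hm0.le
        have hp2 : 0 < (0 - m) * (C / F - μ * C) :=
          mul_pos_of_neg_of_neg (by linarith) hX
        linarith
    · intro h ℓ' hℓ'
      subst h
      rcases le_total ℓ' m with hc | hc
      · have hd := diffA ℓ' 0 hc hm0.le
        have hp : 0 ≤ (0 - ℓ') * (C / F - μ * C) := by
          nlinarith [mul_nonneg hℓ'.1 (neg_nonneg.2 hX.le)]
        linarith
      · have hd1 := diffB ℓ' m hc le_rfl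
        have hp1 : 0 ≤ (ℓ' - m) * (β + μ * C) := mul_nonneg (by linarith) hBpos.le
        have hd2 := diffA m 0 le_rfl hm0.le
        have hp2 : 0 ≤ (0 - m) * (C / F - μ * C) := by
          nlinarith [mul_nonneg hm0.le (neg_nonneg.2 hX.le)]
        linarith
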